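/- Let Q be a non-degenerate bilinear form on Λ ≅ ℤ² satisfying: (a) Q(x,x) ≤ 0 for all x ∈ Λ; (b) there exists D ∈ SL(Λ) (determinant 1 automorphism) such that Q(x,y) = Q(y,Dx) for all x,y ∈ Λ and Dx ≠ ±x for all nonzero x ∈ Λ. Then D has order 3, 4, or 6 as an automorphism of Λ. -/

import Mathlib

open Matrix

/-- Let `Q` be a non-degenerate bilinear form on `Λ ≅ ℤ²` (given by a matrix `M`, via
`Q(x,y) = x ⬝ᵥ M *ᵥ y`) with `Q(x,x) ≤ 0` for all `x`, admitting `D ∈ SL(Λ)` such that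
`Q(x,y) = Q(y,Dx)` for all `x, y`, and `Dx ≠ ±x` for all nonzero `x`. Then `D` has order
`3`, `4`, or `6`. -/
theorem serre_isometry_order (M : Matrix (Fin 2) (Fin 2) ℤ)
    (hnd : ∀ x : Fin 2 → ℤ, (∀ y : Fin 2 → ℤ, x ⬝ᵥ M.mulVec y = 0) → x = 0)
    (hneg : ∀ x : Fin 2 → ℤ, x ⬝ᵥ M.mulVec x ≤ 0)
    (D : Matrix.SpecialLinearGroup (Fin 2) ℤ)
    (hadj : ∀ x y : Fin 2 → ℤ,
      x ⬝ᵥ M.mulVec y = y ⬝ᵥ M.mulVec ((D : Matrix (Fin 2) (Fin 2) ℤ).mulVec x))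
    (hfix : ∀ x : Fin 2 → ℤ, x ≠ 0 →
      (D : Matrix (Fin 2) (Fin 2) ℤ).mulVec x ≠ x ∧
      (D : Matrix (Fin 2) (Fin 2) ℤ).mulVec x ≠ -x) :
    orderOf D = 3 ∨ orderOf D = 4 ∨ orderOf D = 6 := by
  set A : Matrix (Fin 2) (Fin 2) ℤ := (D : Matrix (Fin 2) (Fin 2) ℤ) with hAdef
  have hdetA : A 0 0 * A 1 1 - A 0 1 * A 1 0 = 1 := by
    have := D.2; rw [det_fin_two] at this; exact this
  have he10 : (![1,0] : Fin 2 → ℤ) ≠ 0 := by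
    intro h; have := congrFun h 0; simp at this
  -- M transpose identity
  have hMT : Mᵀ = M * A := by
    have h00 := hadj ![1,0] ![1,0]
    have h01 := hadj ![0,1] ![1,0]
    have h10 := hadj ![1,0] ![0,1]
    have h11 := hadj ![0,1] ![0,1]
    simp [dotProduct, Matrix.mulVec, Fin.sum_univ_two] at h00 h01 h10 h11
    ext i j
    fin_cases i <;> fin_cases j <;>
      simp only [Matrix.transpose_apply, Matrix.mul_apply, Fin.sum_univ_two, Fin.mk_zero,
        Fin.mk_one] <;>
      [linear_combination h00; linear_combination h01; linear_combination h10;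
       linear_combination h11]
  -- nondegeneracy: det M ≠ 0
  have hδ : M.det ≠ 0 := by
    intro h0
    rw [det_fin_two] at h0
    have hx1 : (![M 1 0, -(M 0 0)] : Fin 2 → ℤ) = 0 := by
      refine hnd _ fun y => ?_
      simp [dotProduct, Matrix.mulVec, Fin.sum_univ_two]
      linear_combination (-(y 1)) * h0
    have hx2 : (![M 1 1, -(M 0 1)] : Fin 2 → ℤ) = 0 := by
      refine hnd _ fun y => ?_
      simp [dotProduct, Matrix.mulVec, Fin.sum_univ_two]
      linear_combination (y 0) * h0
    have ha : M 0 0 = 0 := by have := congrFun hx1 1; simpa using this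
    have hc : M 1 0 = 0 := by have := congrFun hx1 0; simpa using this
    have hb : M 0 1 = 0 := by have := congrFun hx2 1; simpa using this
    have hd : M 1 1 = 0 := by have := congrFun hx2 0; simpa using this
    have := hnd ![1,0] fun y => by
      simp [dotProduct, Matrix.mulVec, Fin.sum_univ_two, ha, hb]
    exact he10 this
  -- quadratic form inequality
  have hquad : ∀ u v : ℤ,
      M 0 0*u^2 + (M 0 1 + M 1 0)*u*v + M 1 1*v^2 ≤ 0 := by
    intro u v
    have := hneg ![u,v]
    simp [dotProduct, Matrix.mulVec, Fin.sum_univ_two] at this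
    nlinarith [this]
  have ha0 : M 0 0 ≤ 0 := by have := hquad 1 0; nlinarith
  have hd0 : M 1 1 ≤ 0 := by have := hquad 0 1; nlinarith
  have hkey : (M 0 1 + M 1 0)^2 ≤ 4 * (M 0 0) * (M 1 1) := by
    rcases eq_or_lt_of_le ha0 with ha | ha
    · have he0 : M 0 1 + M 1 0 = 0 := by
        by_contra he
        have h1e : 1 ≤ (M 0 1 + M 1 0)^2 := by
          rcases lt_or_gt_of_ne he with h | h <;> nlinarith
        have := hquad ((M 0 1 + M 1 0) * (1 - M 1 1)) 1
        nlinarith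
      rw [he0, ← ha]; nlinarith
    · have := hquad (-(M 0 1 + M 1 0)) (2 * M 0 0)
      nlinarith
  -- determinant identities
  have hsub : (M - Mᵀ).det = M.det * (2 - (A 0 0 + A 1 1)) := by
    have : M - Mᵀ = M * (1 - A) := by rw [hMT, Matrix.mul_sub, Matrix.mul_one]
    rw [this, Matrix.det_mul]
    congr 1
    rw [det_fin_two]
    simp [Matrix.sub_apply, Matrix.one_apply]
    linear_combination hdetA
  have hadd : (M + Mᵀ).det = M.det * (2 + (A 0 0 + A 1 1)) := by
    have : M + Mᵀ = M * (1 + A) := by rw [hMT, Matrix.mul_add, Matrix.mul_one]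
    rw [this, Matrix.det_mul]
    congr 1
    rw [det_fin_two]
    simp [Matrix.add_apply, Matrix.one_apply]
    linear_combination hdetA
  have hsub' : (M - Mᵀ).det = (M 0 1 - M 1 0)^2 := by
    rw [det_fin_two]; simp [Matrix.sub_apply]; ring
  have hadd' : (M + Mᵀ).det = 4 * (M 0 0) * (M 1 1) - (M 0 1 + M 1 0)^2 := by
    rw [det_fin_two]; simp [Matrix.add_apply]; ring
  have hpos1 : 0 ≤ M.det * (2 - (A 0 0 + A 1 1)) := by
    rw [← hsub, hsub']; positivity
  have hpos2 : 0 ≤ M.det * (2 + (A 0 0 + A 1 1)) := by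
    rw [← hadd, hadd']; linarith
  have hδpos : 0 < M.det := by
    rcases hδ.lt_or_gt with h | h
    · nlinarith
    · exact h
  have htle : -2 ≤ A 0 0 + A 1 1 ∧ A 0 0 + A 1 1 ≤ 2 := by
    constructor <;> nlinarith
  -- exclude trace = 2
  have ht2 : A 0 0 + A 1 1 ≠ 2 := by
    intro ht
    by_cases hx0 : (![A 1 1 - 1, -(A 1 0)] : Fin 2 → ℤ) = 0
    · have hs1 : A 1 1 = 1 := by have := congrFun hx0 0; simp at this; linarith
      have hr0 : A 1 0 = 0 := by have := congrFun hx0 1; simpa using this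
      have hp1 : A 0 0 = 1 := by linarith
      by_cases hq : A 0 1 = 0
      · exact (hfix ![1,0] he10).1 (by
          funext i; fin_cases i <;>
            simp [Matrix.mulVec, dotProduct, Fin.sum_univ_two, hp1, hq, hr0, hs1])
      · refine (hfix ![A 0 1, 0] (fun h => hq (by simpa using congrFun h 0))).1 ?_
        funext i; fin_cases i <;>
          simp [Matrix.mulVec, dotProduct, Fin.sum_univ_two, hp1, hr0]
    · refine (hfix _ hx0).1 ?_
      funext i; fin_cases i <;>
        simp [Matrix.mulVec, dotProduct, Fin.sum_univ_two]
      · linear_combination hdetA - ht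
      · ring
  -- exclude trace = -2
  have htm2 : A 0 0 + A 1 1 ≠ -2 := by
    intro ht
    by_cases hx0 : (![A 1 1 + 1, -(A 1 0)] : Fin 2 → ℤ) = 0
    · have hs1 : A 1 1 = -1 := by have := congrFun hx0 0; simp at this; linarith
      have hr0 : A 1 0 = 0 := by have := congrFun hx0 1; simpa using this
      have hp1 : A 0 0 = -1 := by linarith
      by_cases hq : A 0 1 = 0
      · exact (hfix ![1,0] he10).2 (by
          funext i; fin_cases i <;>
            simp [Matrix.mulVec, dotProduct, Fin.sum_univ_two, hp1, hq, hr0, hs1])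
      · refine (hfix ![A 0 1, 0] (fun h => hq (by simpa using congrFun h 0))).2 ?_
        funext i; fin_cases i <;>
          simp [Matrix.mulVec, dotProduct, Fin.sum_univ_two, hp1, hr0]
    · refine (hfix _ hx0).2 ?_
      funext i; fin_cases i <;>
        simp [Matrix.mulVec, dotProduct, Fin.sum_univ_two]
      · linear_combination hdetA + ht
      · ring
  -- D is not 1
  have hD1 : D ≠ 1 := by
    intro h
    have hA1 : A = 1 := by rw [hAdef, h]; rfl
    exact (hfix ![1,0] he10).1 (by rw [hA1, Matrix.one_mulVec])
  have htcases : A 0 0 + A 1 1 = -1 ∨ A 0 0 + A 1 1 = 0 ∨ A 0 0 + A 1 1 = 1 := by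
    obtain ⟨h1, h2⟩ := htle; omega
  rcases htcases with ht | ht | ht
  · -- order 3
    left
    have hCH : A * A = -A - 1 := by
      ext i j
      fin_cases i <;> fin_cases j <;>
        simp only [Matrix.mul_apply, Fin.sum_univ_two, Fin.mk_zero, Fin.mk_one,
          Matrix.neg_apply, Matrix.sub_apply, Matrix.one_apply] <;> simp <;>
        [linear_combination A 0 0 * ht - hdetA; linear_combination A 0 1 * ht;
         linear_combination A 1 0 * ht; linear_combination A 1 1 * ht - hdetA]
    have hA3 : A ^ 3 = 1 := by
      have h1 : A ^ 3 = (A * A) * A := by rw [pow_succ, pow_two]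
      rw [h1, hCH, sub_mul, neg_mul, hCH]
      noncomm_ring
    have hD3 : D ^ 3 = 1 := by
      ext i j
      have : ((D ^ 3 : SpecialLinearGroup (Fin 2) ℤ) : Matrix (Fin 2) (Fin 2) ℤ) = 1 := by
        exact (Matrix.SpecialLinearGroup.coe_pow (A := D) (m := 3)).trans hA3
      rw [this]; rfl
    haveI : Fact (Nat.Prime 3) := ⟨by norm_num⟩
    exact orderOf_eq_prime hD3 hD1
  · -- order 4
    right; left
    have hCH : A * A = -1 := by
      ext i j
      fin_cases i <;> fin_cases j <;>
        simp only [Matrix.mul_apply, Fin.sum_univ_two, Fin.mk_zero, Fin.mk_one,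
          Matrix.neg_apply, Matrix.one_apply] <;> simp <;>
        [linear_combination A 0 0 * ht - hdetA; linear_combination A 0 1 * ht;
         linear_combination A 1 0 * ht; linear_combination A 1 1 * ht - hdetA]
    have hA4 : A ^ 4 = 1 := by
      have h1 : A ^ 4 = (A * A) * (A * A) := by noncomm_ring
      rw [h1, hCH]; noncomm_ring
    have hD4 : D ^ 4 = 1 := by
      ext i j
      have : ((D ^ 4 : SpecialLinearGroup (Fin 2) ℤ) : Matrix (Fin 2) (Fin 2) ℤ) = 1 := by
        exact (Matrix.SpecialLinearGroup.coe_pow (A := D) (m := 4)).trans hA4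
      rw [this]; rfl
    have hdvd : orderOf D ∣ 4 := orderOf_dvd_of_pow_eq_one hD4
    have hle : orderOf D ≤ 4 := Nat.le_of_dvd (by norm_num) hdvd
    have hD2 : D ^ 2 ≠ 1 := by
      intro h
      have h2 : ((D ^ 2 : SpecialLinearGroup (Fin 2) ℤ) : Matrix (Fin 2) (Fin 2) ℤ)
          = (1 : Matrix (Fin 2) (Fin 2) ℤ) := by rw [h]; rfl
      have h2 := (Matrix.SpecialLinearGroup.coe_pow (A := D) (m := 2)).symm.trans h2
      rw [pow_two, hCH] at h2
      have := congrFun (congrFun h2 0) 0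
      simp [Matrix.one_apply, Matrix.neg_apply] at this
    interval_cases h : orderOf D
    · simp at hdvd
    · exact absurd (orderOf_eq_one_iff.mp h) hD1
    · exact absurd (by have := pow_orderOf_eq_one D; rw [h] at this; exact this) hD2
    · omega
    · rfl
  · -- order 6
    right; right
    have hCH : A * A = A - 1 := by
      ext i j
      fin_cases i <;> fin_cases j <;>
        simp only [Matrix.mul_apply, Fin.sum_univ_two, Fin.mk_zero, Fin.mk_one,
          Matrix.sub_apply, Matrix.one_apply] <;> simp <;>
        [linear_combination A 0 0 * ht - hdetA; linear_combination A 0 1 * ht;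
         linear_combination A 1 0 * ht; linear_combination A 1 1 * ht - hdetA]
    have hA3 : A ^ 3 = -1 := by
      have h1 : A ^ 3 = (A * A) * A := by rw [pow_succ, pow_two]
      rw [h1, hCH, sub_mul, one_mul, hCH]
      noncomm_ring
    have hA6 : A ^ 6 = 1 := by
      have h1 : A ^ 6 = (A ^ 3) * (A ^ 3) := by rw [← pow_add]
      rw [h1, hA3]; noncomm_ring
    have hD6 : D ^ 6 = 1 := by
      ext i j
      have : ((D ^ 6 : SpecialLinearGroup (Fin 2) ℤ) : Matrix (Fin 2) (Fin 2) ℤ) = 1 := by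
        exact (Matrix.SpecialLinearGroup.coe_pow (A := D) (m := 6)).trans hA6
      rw [this]; rfl
    have hdvd : orderOf D ∣ 6 := orderOf_dvd_of_pow_eq_one hD6
    have hle : orderOf D ≤ 6 := Nat.le_of_dvd (by norm_num) hdvd
    have hD2 : D ^ 2 ≠ 1 := by
      intro h
      have h2 : ((D ^ 2 : SpecialLinearGroup (Fin 2) ℤ) : Matrix (Fin 2) (Fin 2) ℤ)
          = (1 : Matrix (Fin 2) (Fin 2) ℤ) := by rw [h]; rfl
      have h2 := (Matrix.SpecialLinearGroup.coe_pow (A := D) (m := 2)).symm.trans h2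
      rw [pow_two, hCH] at h2
      -- A - 1 = 1, so A = 2 * 1, contradicting det A = 1
      have h00 : A 0 0 = 2 := by
        have := congrFun (congrFun h2 0) 0
        simp [Matrix.one_apply, Matrix.sub_apply] at this; linarith
      have h11 : A 1 1 = 2 := by
        have := congrFun (congrFun h2 1) 1
        simp [Matrix.one_apply, Matrix.sub_apply] at this; linarith
      omega
    have hD3 : D ^ 3 ≠ 1 := by
      intro h
      have h3 : ((D ^ 3 : SpecialLinearGroup (Fin 2) ℤ) : Matrix (Fin 2) (Fin 2) ℤ)
          = (1 : Matrix (Fin 2) (Fin 2) ℤ) := by rw [h]; rfl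
      have h3 := (Matrix.SpecialLinearGroup.coe_pow (A := D) (m := 3)).symm.trans h3
      rw [hA3] at h3
      have := congrFun (congrFun h3 0) 0
      simp [Matrix.one_apply, Matrix.neg_apply] at this
    interval_cases h : orderOf D
    · simp at hdvd
    · exact absurd (orderOf_eq_one_iff.mp h) hD1
    · exact absurd (by have := pow_orderOf_eq_one D; rw [h] at this; exact this) hD2
    · exact absurd (by have := pow_orderOf_eq_one D; rw [h] at this; exact this) hD3
    · omega
    · omega
    · rfl
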